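/- arXiv:1602.01908 — 4 statements merged into one kernel-verified Lean document; each statement's English description precedes it below -/
import Mathlib

section
/- For every real q > 0 with q ≠ 1 and all real numbers j, a, b, the following algebraic identity holds: (q² − 1)·q^{a−b−(2j+1)}·[j+a]_q·[j−b]_q + (q⁻² − 1)·q^{a−b+(2j+1)}·[j−a]_q·[j+b]_q = [2j]_q·(q^{2a} + q^{−2b}) − [4j]_q. (This is the key computation behind the microscopic Hopf–Cole / Gärtner transform of ASEP(q,j).) -/
/-- The `q`-number `[n]_q = (q^n - q^(-n))/(q - q⁻¹)` for real `n`. -/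
noncomputable def qNum (q n : ℝ) : ℝ := (q ^ n - q ^ (-n)) / (q - q⁻¹)

/-- Key algebraic identity behind the microscopic Hopf–Cole / Gärtner transform of ASEP(q,j). -/
theorem stmt0 (q : ℝ) (hq : 0 < q) (hq1 : q ≠ 1) (j a b : ℝ) :
    (q ^ (2:ℝ) - 1) * q ^ (a - b - (2*j + 1)) * qNum q (j + a) * qNum q (j - b)
      + (q ^ (-2:ℝ) - 1) * q ^ (a - b + (2*j + 1)) * qNum q (j - a) * qNum q (j + b)
    = qNum q (2*j) * (q ^ (2*a) + q ^ (-2*b)) - qNum q (4*j) := by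
  have hq0 : q ≠ 0 := ne_of_gt hq
  have hd : q - q⁻¹ ≠ 0 := by
    intro h
    apply hq1
    have h2 : q * q = 1 := by field_simp at h; nlinarith [h]
    nlinarith [hq]
  unfold qNum
  have e1 : (2:ℝ) = 1 + 1 := by norm_num
  have e2 : ∀ x : ℝ, 2 * x = x + x := by intro x; ring
  have e4 : ∀ x : ℝ, 4 * x = x + x + (x + x) := by intro x; ring
  rw [e2 a, e2 j, e4 j, show (-2:ℝ)*b = -b + -b by ring, e1]
  rw [show a - b - (j + j + 1) = a + (-b) + (-j + -j) + (-1) by ring,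
      show a - b + (j + j + 1) = a + (-b) + (j + j) + 1 by ring]
  simp only [Real.rpow_add hq, Real.rpow_neg hq.le, Real.rpow_one,
    Real.rpow_sub hq, neg_add]
  have hA : q ^ a ≠ 0 := (Real.rpow_pos_of_pos hq a).ne'
  have hB : q ^ b ≠ 0 := (Real.rpow_pos_of_pos hq b).ne'
  have hJ : q ^ j ≠ 0 := (Real.rpow_pos_of_pos hq j).ne'
  have h21 : q * q - 1 ≠ 0 := by
    intro h
    exact hq1 (by nlinarith)
  have hrw : q - q⁻¹ = (q * q - 1) / q := by field_simp
  rw [hrw]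
  have h22 : q ^ 2 - 1 ≠ 0 := by
    intro h
    exact hq1 (by nlinarith)
  field_simp
  ring
end

section
/- (Deterministic content of the microscopic Hopf–Cole transform, Proposition 2.1(a).) Let q ∈ (0,1), let j > 0 be real, let h : ℤ → ℝ, let C ∈ ℝ, and define Z(x) := C·q^{−2h(x)} for x ∈ ℤ. Set η(y) := h(y) − h(y−1), set ν := ([4j]_q/(2[2j]_q) − 1)/ln q, and define Ω(x) := (q² − 1)·c⁺_q(η(x), η(x+1)) + (q⁻² − 1)·c⁻_q(η(x), η(x+1)) + ν·ln q. Then for every x ∈ ℤ one has Ω(x)·Z(x) = ½·(Z(x+1) + Z(x−1) − 2Z(x)), i.e. Z satisfies the discrete heat equation drift relation. -/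
set_option maxHeartbeats 2000000


/-- ASEP(q,j) jump rate from `x` to `x+1`, with occupation values `a` at `x`, `b` at `x+1`. -/
noncomputable def cPlus (q j a b : ℝ) : ℝ :=
  (1 / (2 * qNum q (2*j))) * q ^ (a - b - (2*j + 1)) * qNum q (j + a) * qNum q (j - b)

/-- ASEP(q,j) jump rate from `x+1` to `x`, with occupation values `a` at `x`, `b` at `x+1`. -/
noncomputable def cMinus (q j a b : ℝ) : ℝ :=
  (1 / (2 * qNum q (2*j))) * q ^ (a - b + (2*j + 1)) * qNum q (j - a) * qNum q (j + b)

/-- Deterministic content of the microscopic Hopf–Cole transform for ASEP(q,j):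
`Ω(x)·Z(x) = ½ Δ Z(x)`. -/
theorem stmt1 (q : ℝ) (hq : q ∈ Set.Ioo (0:ℝ) 1) (j : ℝ) (hj : 0 < j)
    (h : ℤ → ℝ) (C : ℝ)
    (Z : ℤ → ℝ) (hZ : ∀ x, Z x = C * q ^ (-2 * h x))
    (η : ℤ → ℝ) (hη : ∀ y, η y = h y - h (y - 1))
    (ν : ℝ) (hν : ν = (qNum q (4*j) / (2 * qNum q (2*j)) - 1) / Real.log q)
    (Ω : ℤ → ℝ)
    (hΩ : ∀ x, Ω x = (q ^ (2:ℝ) - 1) * cPlus q j (η x) (η (x+1))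
        + (q ^ (-2:ℝ) - 1) * cMinus q j (η x) (η (x+1)) + ν * Real.log q) :
    ∀ x : ℤ, Ω x * Z x = (1/2) * (Z (x+1) + Z (x-1) - 2 * Z x) := by
  intro x
  obtain ⟨hq0, hq1⟩ := hq
  have hqne : q ≠ 0 := ne_of_gt hq0
  have hlog : Real.log q ≠ 0 := ne_of_lt (Real.log_neg hq0 hq1)
  set a := η x with ha
  set b := η (x+1) with hb
  set A := q ^ a with hA
  set B := q ^ b with hB
  set J := q ^ j with hJ
  have hApos : 0 < A := Real.rpow_pos_of_pos hq0 a
  have hBpos : 0 < B := Real.rpow_pos_of_pos hq0 b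
  have hJpos : 0 < J := Real.rpow_pos_of_pos hq0 j
  have hA0 : A ≠ 0 := ne_of_gt hApos
  have hB0 : B ≠ 0 := ne_of_gt hBpos
  have hJ0 : J ≠ 0 := ne_of_gt hJpos
  -- basic rpow rewriting lemmas
  have radd : ∀ s t : ℝ, q ^ (s + t) = q ^ s * q ^ t := fun s t => Real.rpow_add hq0 s t
  have rneg : ∀ s : ℝ, q ^ (-s) = (q ^ s)⁻¹ := fun s => Real.rpow_neg hq0.le s
  -- denominators are nonzero
  have hD : q - q⁻¹ ≠ 0 := by
    have h1 : (1:ℝ) < q⁻¹ := one_lt_inv_iff₀.mpr ⟨hq0, hq1⟩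
    nlinarith
  have hJ1 : J < 1 := Real.rpow_lt_one hq0.le hq1 hj
  have hS : J * J - (J * J)⁻¹ ≠ 0 := by
    have h1 : J * J < 1 := by nlinarith
    have h2 : (1:ℝ) < (J * J)⁻¹ := one_lt_inv_iff₀.mpr ⟨by positivity, h1⟩
    nlinarith
  have hq2j : q ^ (2*j) = J * J := by
    rw [show 2*j = j + j by ring, radd]
  have hq4j : q ^ (4*j) = J * J * (J * J) := by
    rw [show 4*j = (j + j) + (j + j) by ring, radd, radd]
  have hqja : q ^ (j + a) = J * A := radd j a
  have hqjb : q ^ (j + b) = J * B := radd j b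
  have hqjma : q ^ (j - a) = J * A⁻¹ := by
    rw [show j - a = j + (-a) by ring, radd, rneg]
  have hqjmb : q ^ (j - b) = J * B⁻¹ := by
    rw [show j - b = j + (-b) by ring, radd, rneg]
  have hqp : q ^ (a - b - (2*j + 1)) = A * B⁻¹ * (J*J)⁻¹ * q⁻¹ := by
    rw [show a - b - (2*j+1) = a + (-b) + (-(j+j)) + (-(1:ℝ)) by ring,
      radd, radd, radd, rneg, rneg, rneg, radd, Real.rpow_one]
  have hqm : q ^ (a - b + (2*j + 1)) = A * B⁻¹ * (J*J) * q := by
    rw [show a - b + (2*j+1) = a + (-b) + (j+j) + (1:ℝ) by ring,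
      radd, radd, radd, rneg, radd, Real.rpow_one]
  have hq2 : q ^ (2:ℝ) = q * q := by
    rw [show (2:ℝ) = (1:ℝ) + 1 by norm_num, radd, Real.rpow_one]
  have hqm2 : q ^ (-2:ℝ) = (q * q)⁻¹ := by
    rw [show (-2:ℝ) = -(2:ℝ) by norm_num, rneg, hq2]
  have hP : q * q - 1 ≠ 0 := by nlinarith
  have hJJpos : 0 < J * J := mul_pos hJpos hJpos
  have h2lt : J * J < 1 := by nlinarith
  have h4lt : (J*J) * (J*J) < 1 := by nlinarith
  have h8lt : (J*J*(J*J)) * (J*J*(J*J)) < 1 := by nlinarith [mul_pos hJJpos hJJpos]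
  have hG : (J*J) * (J*J) - 1 ≠ 0 := by nlinarith
  have hG4 : (J*J*(J*J)) * (J*J*(J*J)) - 1 ≠ 0 := by nlinarith
  -- a normal form for q-number-like quotients
  have key : ∀ u : ℝ, u ≠ 0 → (u - u⁻¹) / (q - q⁻¹) = (u * u - 1) * q / (u * (q * q - 1)) := by
    intro u hu
    field_simp
  -- qNum values
  have hn2 : qNum q (2*j) = ((J*J) * (J*J) - 1) * q / ((J*J) * (q*q - 1)) := by
    rw [qNum, rneg, hq2j]; exact key (J*J) (by positivity)
  have hn4 : qNum q (4*j) = ((J*J*(J*J)) * (J*J*(J*J)) - 1) * q / ((J*J*(J*J)) * (q*q - 1)) := by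
    rw [qNum, rneg, hq4j]; exact key (J*J*(J*J)) (by positivity)
  have hnja : qNum q (j+a) = ((J*A) * (J*A) - 1) * q / ((J*A) * (q*q - 1)) := by
    rw [qNum, rneg, hqja]; exact key (J*A) (by positivity)
  have hnjb : qNum q (j+b) = ((J*B) * (J*B) - 1) * q / ((J*B) * (q*q - 1)) := by
    rw [qNum, rneg, hqjb]; exact key (J*B) (by positivity)
  have hnjma : qNum q (j-a) = ((J*A⁻¹) * (J*A⁻¹) - 1) * q / ((J*A⁻¹) * (q*q - 1)) := by
    rw [qNum, rneg, hqjma]; exact key (J*A⁻¹) (by positivity)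
  have hnjmb : qNum q (j-b) = ((J*B⁻¹) * (J*B⁻¹) - 1) * q / ((J*B⁻¹) * (q*q - 1)) := by
    rw [qNum, rneg, hqjmb]; exact key (J*B⁻¹) (by positivity)
  -- ν · log q
  have hνlog : ν * Real.log q = qNum q (4*j) / (2 * qNum q (2*j)) - 1 := by
    rw [hν, div_mul_cancel₀ _ hlog]
  -- key identity for Ω
  have hkey : Ω x = (A*A + (B*B)⁻¹) / 2 - 1 := by
    rw [hΩ x, hνlog, cPlus, cMinus, ← ha, ← hb, hn2, hn4, hnja, hnjb, hnjma, hnjmb,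
      hqp, hqm, hq2, hqm2]
    have hP2 : q ^ 2 - 1 ≠ 0 := by rw [show q ^ 2 - 1 = q * q - 1 by ring]; exact hP
    have hJ4 : J ^ 4 - 1 ≠ 0 := by rw [show J ^ 4 - 1 = J * J * (J * J) - 1 by ring]; exact hG
    have hX : 1 - q ^ 2 + q ^ 2 * J ^ 4 - J ^ 4 ≠ 0 := by
      rw [show 1 - q ^ 2 + q ^ 2 * J ^ 4 - J ^ 4 = (q ^ 2 - 1) * (J ^ 4 - 1) by ring]
      exact mul_ne_zero hP2 hJ4
    field_simp
    ring
  -- Z relations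
  have hbz : h (x+1) = h x + b := by
    have hb' : b = h (x+1) - h (x+1-1) := by rw [hb]; exact hη (x+1)
    rw [show (x+1:ℤ) - 1 = x by ring] at hb'
    linarith
  have haz : h (x-1) = h x - a := by
    have ha' : a = h x - h (x-1) := by rw [ha]; exact hη x
    linarith
  have hZ1 : Z (x+1) = Z x * (B*B)⁻¹ := by
    rw [hZ (x+1), hZ x, hbz, hB,
      show -2 * (h x + b) = (-2 * h x) + (-(b + b)) by ring, radd, rneg, radd]
    ring
  have hZ2 : Z (x-1) = Z x * (A*A) := by
    rw [hZ (x-1), hZ x, haz, hA,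
      show -2 * (h x - a) = (-2 * h x) + (a + a) by ring, radd, radd]
    ring
  rw [hkey, hZ1, hZ2]
  ring
end

section
/- (Quadratic variation rate identity, from the proof of Proposition 2.1(b).) For every real q > 0 with q ≠ 1, every real j such that [2j]_q ≠ 0, and all real a, b, one has (q² − 1)²·c⁺_q(a,b) + (q⁻² − 1)²·c⁻_q(a,b) = (1/(2[2j]_q))·[ ((q² − 1)/(q − q⁻¹))·(q^{2a} − q^{−2j})·(q^{−2b} − q^{−2j}) − ((q⁻² − 1)/(q − q⁻¹))·(q^{2j} − q^{2a})·(q^{2j} − q^{−2b}) ]. -/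
set_option maxHeartbeats 1000000 in
/-- Quadratic variation rate identity from the proof of Proposition 2.1(b). -/
theorem stmt3 (q : ℝ) (hq : 0 < q) (hq1 : q ≠ 1) (j : ℝ) (hj : qNum q (2*j) ≠ 0)
    (a b : ℝ) :
    (q ^ (2:ℝ) - 1)^2 * cPlus q j a b + (q ^ (-2:ℝ) - 1)^2 * cMinus q j a b
      = (1 / (2 * qNum q (2*j)))
        * ( ((q ^ (2:ℝ) - 1) / (q - q⁻¹))
              * (q ^ (2*a) - q ^ (-2*j)) * (q ^ (-2*b) - q ^ (-2*j))
          - ((q ^ (-2:ℝ) - 1) / (q - q⁻¹))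
              * (q ^ (2*j) - q ^ (2*a)) * (q ^ (2*j) - q ^ (-2*b)) ) := by
  have hq0 : q ≠ 0 := hq.ne'
  have hd : q - q⁻¹ ≠ 0 := fun h => hj (by unfold qNum; rw [h, div_zero])
  have E : ∀ x y : ℝ, q ^ (x + y) = q ^ x * q ^ y := fun x y => Real.rpow_add hq x y
  have N : ∀ x : ℝ, q ^ (-x) = (q ^ x)⁻¹ := fun x => Real.rpow_neg hq.le x
  have h1 : q ^ (2*j) = q^j * q^j := by
    rw [show (2*j : ℝ) = j + j by ring, E]
  have h2 : q ^ (a - b - (2*j + 1)) = q^a * ((q^b)⁻¹ * ((q^j)⁻¹ * ((q^j)⁻¹ * q⁻¹))) := by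
    rw [show a - b - (2*j + 1) = a + (-b + (-j + (-j + -1))) by ring]
    simp only [E, N, Real.rpow_one]
  have h3 : q ^ (j + a) = q^j * q^a := E j a
  have h4 : q ^ (j - b) = q^j * (q^b)⁻¹ := by
    rw [show j - b = j + -b by ring, E, N]
  have h5 : q ^ (a - b + (2*j + 1)) = q^a * ((q^b)⁻¹ * (q^j * (q^j * q))) := by
    rw [show a - b + (2*j + 1) = a + (-b + (j + (j + 1))) by ring]
    simp only [E, N, Real.rpow_one]
  have h6 : q ^ (j - a) = q^j * (q^a)⁻¹ := by
    rw [show j - a = j + -a by ring, E, N]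
  have h7 : q ^ (j + b) = q^j * q^b := E j b
  have h8 : q ^ (2:ℝ) = q * q := by
    rw [show (2:ℝ) = 1 + 1 by norm_num, E, Real.rpow_one]
  have h10 : q ^ (2*a) = q^a * q^a := by
    rw [show (2*a : ℝ) = a + a by ring, E]
  have h11 : q ^ (-2*j) = (q^j * q^j)⁻¹ := by
    rw [show (-2*j : ℝ) = -(j + j) by ring, N, E]
  have h12 : q ^ (-2*b) = (q^b * q^b)⁻¹ := by
    rw [show (-2*b : ℝ) = -(b + b) by ring, N, E]
  have hA : q ^ a ≠ 0 := (Real.rpow_pos_of_pos hq a).ne'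
  have hB : q ^ b ≠ 0 := (Real.rpow_pos_of_pos hq b).ne'
  have hJ : q ^ j ≠ 0 := (Real.rpow_pos_of_pos hq j).ne'
  have main : (q ^ (2:ℝ) - 1)^2
        * (q ^ (a - b - (2*j + 1)) * qNum q (j + a) * qNum q (j - b))
      + (q ^ (-2:ℝ) - 1)^2
        * (q ^ (a - b + (2*j + 1)) * qNum q (j - a) * qNum q (j + b))
      = ((q ^ (2:ℝ) - 1) / (q - q⁻¹))
              * (q ^ (2*a) - q ^ (-2*j)) * (q ^ (-2*b) - q ^ (-2*j))
          - ((q ^ (-2:ℝ) - 1) / (q - q⁻¹))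
              * (q ^ (2*j) - q ^ (2*a)) * (q ^ (2*j) - q ^ (-2*b)) := by
    unfold qNum
    simp only [N]
    rw [h1, h2, h3, h4, h5, h6, h7, h8, h10, h11, h12]
    generalize q ^ a = A at *
    generalize q ^ b = B at *
    generalize q ^ j = J at *
    have hqq : q * q - 1 ≠ 0 := by
      have : q * q - 1 = (q - q⁻¹) * q := by field_simp
      rw [this]; exact mul_ne_zero hd hq0
    have hqq2 : q ^ 2 - 1 ≠ 0 := by rw [sq]; exact hqq
    field_simp [hd, hqq, hqq2]
    ring
  unfold cPlus cMinus
  calc (q ^ (2:ℝ) - 1)^2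
        * ((1 / (2 * qNum q (2*j))) * q ^ (a - b - (2*j + 1)) * qNum q (j + a) * qNum q (j - b))
      + (q ^ (-2:ℝ) - 1)^2
        * ((1 / (2 * qNum q (2*j))) * q ^ (a - b + (2*j + 1)) * qNum q (j - a) * qNum q (j + b))
      = (1 / (2 * qNum q (2*j)))
        * ((q ^ (2:ℝ) - 1)^2
            * (q ^ (a - b - (2*j + 1)) * qNum q (j + a) * qNum q (j - b))
          + (q ^ (-2:ℝ) - 1)^2
            * (q ^ (a - b + (2*j + 1)) * qNum q (j - a) * qNum q (j + b))) := by ring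
    _ = _ := by rw [main]
end

section
/- (Uniform asymptotics of the martingale bracket, Proposition 2.1(b).) Fix a real j > 0 and for ε > 0 set q_ε := e^{−√ε}. Then lim_{ε→0⁺} sup_{a,b ∈ [−j,j]} | ε⁻¹·( (q_ε² − 1)²·c⁺_{q_ε}(a,b) + (q_ε⁻² − 1)²·c⁻_{q_ε}(a,b) ) − 2(j² − ab)/j | = 0. -/
/-- The weakly asymmetric scaling `q_ε = e^{−√ε}`. -/
noncomputable def qe (ε : ℝ) : ℝ := Real.exp (-Real.sqrt ε)

/-- `sinh x / x`, extended continuously at `0`. -/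
noncomputable def sRatio (x : ℝ) : ℝ := if x = 0 then 1 else Real.sinh x / x

lemma sRatio_pos (x : ℝ) : 0 < sRatio x := by
  unfold sRatio
  rcases lt_trichotomy x 0 with h | h | h
  · rw [if_neg h.ne]
    have : Real.sinh x < 0 := by rw [← Real.sinh_zero]; exact Real.sinh_lt_sinh.2 h
    exact div_pos_of_neg_of_neg this h
  · simp [h]
  · rw [if_neg h.ne']
    exact div_pos (Real.sinh_pos_iff.2 h) h

lemma continuous_sRatio : Continuous sRatio := by
  rw [continuous_iff_continuousAt]
  intro x
  rcases eq_or_ne x 0 with rfl | hx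
  · have h := hasDerivAt_iff_tendsto_slope.1 (Real.hasDerivAt_sinh 0)
    simp only [Real.cosh_zero] at h
    have h2 : Filter.Tendsto sRatio (nhdsWithin 0 {(0:ℝ)}ᶜ) (nhds 1) := by
      refine h.congr' ?_
      filter_upwards [self_mem_nhdsWithin] with y hy
      simp only [Set.mem_compl_iff, Set.mem_singleton_iff] at hy
      simp [slope, Real.sinh_zero, sRatio, hy, div_eq_inv_mul]
    have h0 : sRatio 0 = 1 := by simp [sRatio]
    unfold ContinuousAt
    rw [h0, ← nhdsNE_sup_pure]
    exact Filter.Tendsto.sup h2 (h0 ▸ tendsto_pure_nhds sRatio 0)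
  · have : ContinuousAt (fun y => Real.sinh y / y) x :=
      (Real.continuous_sinh.continuousAt).div continuousAt_id hx
    refine this.congr ?_
    filter_upwards [isOpen_compl_singleton.mem_nhds hx] with y hy
    simp only [Set.mem_compl_iff, Set.mem_singleton_iff] at hy
    simp [sRatio, hy]

lemma sinh_eq_sRatio (x : ℝ) : Real.sinh x = x * sRatio x := by
  unfold sRatio
  rcases eq_or_ne x 0 with rfl | hx
  · simp
  · rw [if_neg hx]; field_simp

/-- The limiting expression, written so that it is continuous in all variables. -/
noncomputable def Phi (j : ℝ) (p : ℝ × ℝ × ℝ) : ℝ :=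
  (sRatio p.1 / (j * sRatio (p.1 * (2*j)))) *
    (Real.exp (-(p.1*(p.2.1 - p.2.2 - 2*j + 1))) *
        ((j+p.2.1)*(j-p.2.2) * (sRatio (p.1*(j+p.2.1)) * sRatio (p.1*(j-p.2.2))))
     + Real.exp (-(p.1*(p.2.1 - p.2.2 + 2*j - 1))) *
        ((j-p.2.1)*(j+p.2.2) * (sRatio (p.1*(j-p.2.1)) * sRatio (p.1*(j+p.2.2)))))

lemma Phi_zero (j : ℝ) (hj : j ≠ 0) (a b : ℝ) :
    Phi j (0, a, b) = 2 * (j^2 - a*b) / j := by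
  have h0 : sRatio 0 = 1 := by simp [sRatio]
  simp only [Phi, zero_mul, neg_zero, Real.exp_zero, h0]
  field_simp
  ring

lemma continuous_Phi (j : ℝ) (hj : j ≠ 0) : Continuous (Phi j) := by
  have c1 : Continuous fun p : ℝ × ℝ × ℝ => p.1 := continuous_fst
  have c2 : Continuous fun p : ℝ × ℝ × ℝ => p.2.1 := continuous_snd.fst
  have c3 : Continuous fun p : ℝ × ℝ × ℝ => p.2.2 := continuous_snd.snd
  unfold Phi
  apply Continuous.mul
  · exact (continuous_sRatio.comp c1).div
      (continuous_const.mul (continuous_sRatio.comp (c1.mul continuous_const)))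
      (fun p => mul_ne_zero hj (sRatio_pos _).ne')
  · apply Continuous.add
    · exact (Real.continuous_exp.comp
        (c1.mul (((c2.sub c3).sub continuous_const).add continuous_const)).neg).mul
        (((continuous_const.add c2).mul (continuous_const.sub c3)).mul
          ((continuous_sRatio.comp (c1.mul (continuous_const.add c2))).mul
           (continuous_sRatio.comp (c1.mul (continuous_const.sub c3)))))
    · exact (Real.continuous_exp.comp
        (c1.mul (((c2.sub c3).add continuous_const).sub continuous_const)).neg).mul
        (((continuous_const.sub c2).mul (continuous_const.add c3)).mul
          ((continuous_sRatio.comp (c1.mul (continuous_const.sub c2))).mul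
           (continuous_sRatio.comp (c1.mul (continuous_const.add c3)))))

set_option maxHeartbeats 1000000 in
lemma key (j : ℝ) (hj : 0 < j) (t a b : ℝ) (ht : 0 < t) :
    (t^2)⁻¹ * ((Real.exp (-t) ^ (2:ℝ) - 1)^2 * cPlus (Real.exp (-t)) j a b
      + (Real.exp (-t) ^ (-2:ℝ) - 1)^2 * cMinus (Real.exp (-t)) j a b)
    = Phi j (t, a, b) := by
  have hrpow : ∀ r : ℝ, Real.exp (-t) ^ r = Real.exp (-(t*r)) := by
    intro r
    rw [← Real.exp_mul]; ring_nf
  have hsub : Real.exp (-t) - Real.exp t ≠ 0 := by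
    have : Real.exp (-t) < Real.exp t := Real.exp_lt_exp.2 (by linarith)
    exact sub_ne_zero.2 this.ne
  have hst : Real.sinh t ≠ 0 := (Real.sinh_pos_iff.2 ht).ne'
  have hqnum : ∀ n : ℝ, qNum (Real.exp (-t)) n = Real.sinh (t*n) / Real.sinh t := by
    intro n
    unfold qNum
    rw [hrpow, hrpow, show (Real.exp (-t))⁻¹ = Real.exp t by rw [← Real.exp_neg, neg_neg],
      show -(t * -n) = t*n by ring, Real.sinh_eq, Real.sinh_eq, div_div_div_comm,
      show Real.exp (t*n) - Real.exp (-(t*n)) = -(Real.exp (-(t*n)) - Real.exp (t*n)) by ring,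
      show Real.exp t - Real.exp (-t) = -(Real.exp (-t) - Real.exp t) by ring,
      neg_div_neg_eq]
    norm_num
  unfold cPlus cMinus Phi
  simp only [hqnum, hrpow]
  -- normalize exponents
  rw [show -(t * (a - b - (2*j + 1))) = -(t*(a - b - 2*j + 1)) + t*2 by ring,
      show -(t * (a - b + (2*j + 1))) = -(t*(a - b + 2*j - 1)) + -(t*2) by ring,
      show -(t * (-2:ℝ)) = t*2 by ring,
      Real.exp_add, Real.exp_add]
  -- squares
  have hA : Real.exp (-(t*2)) = (Real.exp (t*2))⁻¹ := by
    rw [← Real.exp_neg]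
  have hY : Real.exp (t*2) = Real.exp t * Real.exp t := by
    rw [← Real.exp_add]; ring_nf
  have hE := Real.exp_ne_zero t
  have e1 : (Real.exp (-(t*2)) - 1)^2 = (Real.exp (t*2))⁻¹ * (2*Real.sinh t)^2 := by
    rw [hA, hY, Real.sinh_eq, Real.exp_neg]
    field_simp
    ring
  have e2 : (Real.exp (t*2) - 1)^2 = Real.exp (t*2) * (2*Real.sinh t)^2 := by
    rw [hY, Real.sinh_eq, Real.exp_neg]
    field_simp
  rw [e1, e2, hA]
  -- sinh → sRatio
  rw [sinh_eq_sRatio (t*(2*j)), sinh_eq_sRatio (t*(j+a)), sinh_eq_sRatio (t*(j-b)),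
      sinh_eq_sRatio (t*(j-a)), sinh_eq_sRatio (t*(j+b)), sinh_eq_sRatio t]
  have h1 := (sRatio_pos (t*(2*j))).ne'
  have h0 := (sRatio_pos t).ne'
  have hY2 := Real.exp_ne_zero (t*2)
  field_simp [h0, h1, hY2, ht.ne', hj.ne']

/-- Uniform asymptotics of the martingale bracket (Proposition 2.1(b)):
`ε⁻¹((q_ε²−1)²c⁺ + (q_ε⁻²−1)²c⁻) → 2(j²−ab)/j` uniformly over `a, b ∈ [−j,j]`. -/
theorem stmt4 (j : ℝ) (hj : 0 < j) :
    Filter.Tendsto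
      (fun ε : ℝ => sSup { v : ℝ | ∃ a ∈ Set.Icc (-j) j, ∃ b ∈ Set.Icc (-j) j,
        v = |ε⁻¹ * ((qe ε ^ (2:ℝ) - 1)^2 * cPlus (qe ε) j a b
              + (qe ε ^ (-2:ℝ) - 1)^2 * cMinus (qe ε) j a b)
            - 2 * (j^2 - a*b) / j| })
      (nhdsWithin 0 (Set.Ioi 0)) (nhds 0) := by
  have hK : IsCompact ((Set.Icc (-1:ℝ) 1) ×ˢ (Set.Icc (-j) j ×ˢ Set.Icc (-j) j)) :=
    isCompact_Icc.prod (isCompact_Icc.prod isCompact_Icc)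
  have hUC := hK.uniformContinuousOn_of_continuous (continuous_Phi j hj.ne').continuousOn
  rw [Metric.tendsto_nhdsWithin_nhds]
  intro η hη
  obtain ⟨δ, hδ, hδ'⟩ := Metric.uniformContinuousOn_iff.1 hUC (η/2) (by linarith)
  refine ⟨min (δ^2) 1, by positivity, ?_⟩
  intro ε hε hdist
  have hε0 : (0:ℝ) < ε := hε
  set t := Real.sqrt ε with htdef
  have ht : 0 < t := Real.sqrt_pos.2 hε0
  have hεlt : ε < min (δ^2) 1 := by
    rwa [Real.dist_eq, sub_zero, abs_of_pos hε0] at hdist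
  have htδ : t < δ := by
    have h' : ε < δ^2 := lt_of_lt_of_le hεlt (min_le_left _ _)
    calc t < Real.sqrt (δ^2) := Real.sqrt_lt_sqrt hε0.le h'
    _ = δ := Real.sqrt_sq hδ.le
  have ht1 : t ≤ 1 := by
    have h' : ε ≤ 1 := le_of_lt (lt_of_lt_of_le hεlt (min_le_right _ _))
    calc t ≤ Real.sqrt 1 := Real.sqrt_le_sqrt h'
    _ = 1 := Real.sqrt_one
  have hmem : ∀ v ∈ { v : ℝ | ∃ a ∈ Set.Icc (-j) j, ∃ b ∈ Set.Icc (-j) j,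
        v = |ε⁻¹ * ((qe ε ^ (2:ℝ) - 1)^2 * cPlus (qe ε) j a b
              + (qe ε ^ (-2:ℝ) - 1)^2 * cMinus (qe ε) j a b)
            - 2 * (j^2 - a*b) / j| }, 0 ≤ v ∧ v ≤ η/2 := by
    rintro v ⟨a, ha, b, hb, rfl⟩
    refine ⟨abs_nonneg _, ?_⟩
    have hqe : qe ε = Real.exp (-t) := rfl
    have hεt : ε = t^2 := (Real.sq_sqrt hε0.le).symm
    have hrw : ε⁻¹ * ((qe ε ^ (2:ℝ) - 1)^2 * cPlus (qe ε) j a b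
              + (qe ε ^ (-2:ℝ) - 1)^2 * cMinus (qe ε) j a b) = Phi j (t, a, b) := by
      rw [hqe, hεt]
      exact key j hj t a b ht
    have hL : 2 * (j^2 - a*b) / j = Phi j (0, a, b) := (Phi_zero j hj.ne' a b).symm
    rw [hrw, hL]
    have hxC : ((t, a, b) : ℝ × ℝ × ℝ) ∈
        (Set.Icc (-1:ℝ) 1) ×ˢ (Set.Icc (-j) j ×ˢ Set.Icc (-j) j) :=
      ⟨Set.mem_Icc.2 ⟨by linarith, ht1⟩, Set.mk_mem_prod ha hb⟩
    have hyC : ((0, a, b) : ℝ × ℝ × ℝ) ∈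
        (Set.Icc (-1:ℝ) 1) ×ˢ (Set.Icc (-j) j ×ˢ Set.Icc (-j) j) :=
      ⟨Set.mem_Icc.2 ⟨by norm_num, by norm_num⟩, Set.mk_mem_prod ha hb⟩
    have hdist' : dist ((t, a, b) : ℝ × ℝ × ℝ) (0, a, b) < δ := by
      rw [Prod.dist_eq]
      simp only [dist_self, Real.dist_eq, sub_zero]
      rw [max_eq_left (abs_nonneg _), abs_of_pos ht]
      exact htδ
    have := hδ' (t, a, b) hxC (0, a, b) hyC hdist'
    rw [Real.dist_eq] at this
    linarith
  have h0' : 0 ≤ sSup { v : ℝ | ∃ a ∈ Set.Icc (-j) j, ∃ b ∈ Set.Icc (-j) j,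
        v = |ε⁻¹ * ((qe ε ^ (2:ℝ) - 1)^2 * cPlus (qe ε) j a b
              + (qe ε ^ (-2:ℝ) - 1)^2 * cMinus (qe ε) j a b)
            - 2 * (j^2 - a*b) / j| } :=
    Real.sSup_nonneg (fun v hv => (hmem v hv).1)
  have h1' : sSup { v : ℝ | ∃ a ∈ Set.Icc (-j) j, ∃ b ∈ Set.Icc (-j) j,
        v = |ε⁻¹ * ((qe ε ^ (2:ℝ) - 1)^2 * cPlus (qe ε) j a b
              + (qe ε ^ (-2:ℝ) - 1)^2 * cMinus (qe ε) j a b)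
            - 2 * (j^2 - a*b) / j| } ≤ η/2 :=
    Real.sSup_le (fun v hv => (hmem v hv).2) (by linarith)
  rw [Real.dist_eq, sub_zero, abs_of_nonneg h0']
  linarith
end
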